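/- arXiv:1703.00663 — 7 statements merged into one kernel-verified Lean document; each statement's English description precedes it below -/
import Mathlib

section
/- For a = 2, the 6×6 matrix M_a has nonnegative rank exactly 3, i.e., rank₊(M₂) = 3. -/
/-- The nonnegative rank of a matrix: the smallest `r` such that `M = U * V`
with `U : p × r` and `V : r × n` entrywise nonnegative. -/
noncomputable def nnRank {p n : ℕ} (M : Matrix (Fin p) (Fin n) ℝ) : ℕ :=
  sInf {r : ℕ | ∃ (U : Matrix (Fin p) (Fin r) ℝ) (V : Matrix (Fin r) (Fin n) ℝ),
    (∀ i k, 0 ≤ U i k) ∧ (∀ k j, 0 ≤ V k j) ∧ M = U * V}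

/-- The nested-hexagon matrix `M_a` for a parameter `a`. -/
noncomputable def hexM (a : ℝ) : Matrix (Fin 6) (Fin 6) ℝ :=
  (1 / a) • !![1,     a,     2*a-1, 2*a-1, a,     1;
               1,     1,     a,     2*a-1, 2*a-1, a;
               a,     1,     1,     a,     2*a-1, 2*a-1;
               2*a-1, a,     1,     1,     a,     2*a-1;
               2*a-1, 2*a-1, a,     1,     1,     a;
               a,     2*a-1, 2*a-1, a,     1,     1]

section Aux

variable {α : Type*}

lemma hex_cv0 (a b c d e f : α) : ![a,b,c,d,e,f] 0 = a := rfl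
lemma hex_cv1 (a b c d e f : α) : ![a,b,c,d,e,f] 1 = b := rfl
lemma hex_cv2 (a b c d e f : α) : ![a,b,c,d,e,f] 2 = c := rfl
lemma hex_cv3 (a b c d e f : α) : ![a,b,c,d,e,f] 3 = d := rfl
lemma hex_cv4 (a b c d e f : α) : ![a,b,c,d,e,f] 4 = e := rfl
lemma hex_cv5 (a b c d e f : α) : ![a,b,c,d,e,f] 5 = f := rfl
lemma hex_cw0 (a b c : α) : ![a,b,c] 0 = a := rfl
lemma hex_cw1 (a b c : α) : ![a,b,c] 1 = b := rfl
lemma hex_cw2 (a b c : α) : ![a,b,c] 2 = c := rfl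

end Aux

set_option maxHeartbeats 2000000 in
/-- For `a = 2`, the hexagon matrix has nonnegative rank exactly 3. -/
theorem nnRank_hexM_two : nnRank (hexM 2) = 3 := by
  have hmem : 3 ∈ {r : ℕ | ∃ (U : Matrix (Fin 6) (Fin r) ℝ) (V : Matrix (Fin r) (Fin 6) ℝ),
      (∀ i k, 0 ≤ U i k) ∧ (∀ k j, 0 ≤ V k j) ∧ hexM 2 = U * V} := by
    refine ⟨!![(0:ℝ),2,1; 0,1,2; 1,0,2; 2,0,1; 2,1,0; 1,2,0],
      !![(2:ℝ)/3,1/2,1/6,0,1/6,1/2; 1/6,1/2,2/3,1/2,1/6,0; 1/6,0,1/6,1/2,2/3,1/2], ?_, ?_, ?_⟩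
    · intro i k
      fin_cases i <;> fin_cases k <;>
        · simp only [hex_cv0, hex_cv1, hex_cv2, hex_cv3, hex_cv4, hex_cv5,
            hex_cw0, hex_cw1, hex_cw2, Matrix.of_apply]
          norm_num
    · intro k j
      fin_cases k <;> fin_cases j <;>
        · simp only [hex_cv0, hex_cv1, hex_cv2, hex_cv3, hex_cv4, hex_cv5,
            hex_cw0, hex_cw1, hex_cw2, Matrix.of_apply]
          norm_num
    · ext i j
      fin_cases i <;> fin_cases j <;>
        · simp only [hexM, Matrix.mul_apply, Fin.sum_univ_three, Matrix.smul_apply,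
            Matrix.of_apply, hex_cv0, hex_cv1, hex_cv2, hex_cv3, hex_cv4, hex_cv5,
            hex_cw0, hex_cw1, hex_cw2, smul_eq_mul, Matrix.cons_val, Fin.reduceFinMk]
          norm_num
  refine le_antisymm (Nat.sInf_le hmem) (le_csInf ⟨3, hmem⟩ ?_)
  rintro r ⟨U, V, -, -, hM⟩
  by_contra hlt
  push_neg at hlt
  -- the leading 3×3 submatrix has nonzero determinant, hence rank 3,
  -- but it factors through `Fin r` with `r < 3`.
  set f : Fin 3 → Fin 6 := ![0, 1, 2] with hf
  set S : Matrix (Fin 3) (Fin 3) ℝ := (hexM 2).submatrix f f with hS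
  have hSval : S = !![(1:ℝ)/2, 1, 3/2; 1/2, 1/2, 1; 1, 1/2, 1/2] := by
    ext i j
    fin_cases i <;> fin_cases j <;>
      · simp only [hS, hf, hexM, Matrix.submatrix_apply, Matrix.smul_apply, Matrix.of_apply,
          hex_cv0, hex_cv1, hex_cv2, hex_cv3, hex_cv4, hex_cv5,
          hex_cw0, hex_cw1, hex_cw2, smul_eq_mul, Matrix.cons_val, Fin.reduceFinMk]
        norm_num
  have hdet : S.det = 1/4 := by
    rw [hSval, Matrix.det_fin_three]
    simp only [hex_cw0, hex_cw1, hex_cw2, Matrix.of_apply]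
    norm_num
  have hunit : IsUnit S := by
    rw [Matrix.isUnit_iff_isUnit_det, hdet]
    exact isUnit_iff_ne_zero.mpr (by norm_num)
  have hrank3 : S.rank = 3 := by
    rw [Matrix.rank_of_isUnit S hunit, Fintype.card_fin]
  have hfac : S = (U.submatrix f id) * (V.submatrix id f) := by
    ext i j
    simp [hS, hM, Matrix.mul_apply, Matrix.submatrix]
  have hle : S.rank ≤ r := by
    rw [hfac]
    exact (Matrix.rank_mul_le_left _ _).trans
      ((Matrix.rank_le_card_width _).trans (by simp))
  omega
end

section
/- For every real number a > 2, the 6×6 matrix M_a has nonnegative rank at least 4, i.e., rank₊(M_a) ≥ 4: there is no factorization M_a = U·V with U ∈ ℝ^{6×3} and V ∈ ℝ^{3×6} entrywise nonnegative. -/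
private lemma hex_cons_val_five {α : Type*} (x : α) (u : Fin 5 → α) :
    Matrix.vecCons x u 5 = u 4 := rfl

/-- Certificate bilinear form is nonnegative on the hexagonal cone `K × K`. -/
private lemma hex_cert (p0 p1 y q0 q1 z : ℝ)
    (hp0 : 0 ≤ p0) (hp1 : 0 ≤ p1) (hp2 : 0 ≤ -p0+p1+y) (hp3 : 0 ≤ 2*y-p0)
    (hp4 : 0 ≤ 2*y-p1) (hp5 : 0 ≤ p0-p1+y)
    (hq0 : 0 ≤ q0) (hq1 : 0 ≤ q1) (hq2 : 0 ≤ -q0+q1+z) (hq3 : 0 ≤ 2*z-q0)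
    (hq4 : 0 ≤ 2*z-q1) (hq5 : 0 ≤ q0-q1+z) :
    0 ≤ y*z + (p0-y)*(q0-q1) + (p1-y)*(q1-z) := by
  have hz : 0 ≤ z := by linarith
  rcases le_total p0 y with h0 | h0 <;> rcases le_total p1 y with h1 | h1 <;>
    rcases le_total p0 p1 with h2 | h2
  · nlinarith [mul_nonneg (by linarith : (0:ℝ) ≤ p1-p0) hq2,
      mul_nonneg (by linarith : (0:ℝ) ≤ y-p1) hq3, mul_nonneg hp0 hz]
  · nlinarith [mul_nonneg (by linarith : (0:ℝ) ≤ y-p0) hq3,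
      mul_nonneg (by linarith : (0:ℝ) ≤ p0-p1) hq4, mul_nonneg hp1 hz]
  · nlinarith [mul_nonneg (by linarith : (0:ℝ) ≤ p1-y) hq1,
      mul_nonneg (by linarith : (0:ℝ) ≤ y-p0) hq2, mul_nonneg hp5 hz]
  · nlinarith [mul_nonneg (by linarith : (0:ℝ) ≤ p1-y) hq1,
      mul_nonneg (by linarith : (0:ℝ) ≤ y-p0) hq2, mul_nonneg hp5 hz]
  · nlinarith [mul_nonneg (by linarith : (0:ℝ) ≤ y-p1) hq4,
      mul_nonneg (by linarith : (0:ℝ) ≤ p0-y) hq5, mul_nonneg hp2 hz]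
  · nlinarith [mul_nonneg (by linarith : (0:ℝ) ≤ y-p1) hq4,
      mul_nonneg (by linarith : (0:ℝ) ≤ p0-y) hq5, mul_nonneg hp2 hz]
  · nlinarith [mul_nonneg (by linarith : (0:ℝ) ≤ p0-y) hq0,
      mul_nonneg (by linarith : (0:ℝ) ≤ p1-p0) hq1, mul_nonneg hp4 hz]
  · nlinarith [mul_nonneg (by linarith : (0:ℝ) ≤ p0-p1) hq5,
      mul_nonneg (by linarith : (0:ℝ) ≤ p1-y) hq0, mul_nonneg hp3 hz]

/-- Scalar Cramer rule for a 3×3 system with nonzero determinant. -/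
private lemma hex_cramer3 (w00 w01 w02 w10 w11 w12 w20 w21 w22 d0 d1 d2 : ℝ)
    (hdet : w00*(w11*w22 - w12*w21) - w01*(w10*w22 - w12*w20) + w02*(w10*w21 - w11*w20) ≠ 0)
    (h0 : d0*w00 + d1*w10 + d2*w20 = 0)
    (h1 : d0*w01 + d1*w11 + d2*w21 = 0)
    (h2 : d0*w02 + d1*w12 + d2*w22 = 0) :
    d0 = 0 ∧ d1 = 0 ∧ d2 = 0 := by
  refine ⟨?_, ?_, ?_⟩
  · have h : d0 * (w00*(w11*w22 - w12*w21) - w01*(w10*w22 - w12*w20) + w02*(w10*w21 - w11*w20)) = 0 := by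
      linear_combination (w11*w22 - w12*w21)*h0 - (w10*w22 - w12*w20)*h1 + (w10*w21 - w11*w20)*h2
    exact (mul_eq_zero.1 h).resolve_right hdet
  · have h : d1 * (w00*(w11*w22 - w12*w21) - w01*(w10*w22 - w12*w20) + w02*(w10*w21 - w11*w20)) = 0 := by
      linear_combination (-(w01*w22 - w02*w21))*h0 + (w00*w22 - w02*w20)*h1 + (-(w00*w21 - w01*w20))*h2
    exact (mul_eq_zero.1 h).resolve_right hdet
  · have h : d2 * (w00*(w11*w22 - w12*w21) - w01*(w10*w22 - w12*w20) + w02*(w10*w21 - w11*w20)) = 0 := by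
      linear_combination (w01*w12 - w02*w11)*h0 + (-(w00*w12 - w02*w10))*h1 + (w00*w11 - w01*w10)*h2
    exact (mul_eq_zero.1 h).resolve_right hdet

set_option maxHeartbeats 2000000 in
private lemma hex_noFact {a : ℝ} (ha : 2 < a) :
    ¬ ∃ (U : Matrix (Fin 6) (Fin 3) ℝ) (V : Matrix (Fin 3) (Fin 6) ℝ),
        (∀ i k, 0 ≤ U i k) ∧ (∀ k j, 0 ≤ V k j) ∧ hexM a = U * V := by
  rintro ⟨U, V, hU, hV, h⟩
  have ha0 : (0:ℝ) < a := by linarith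
  have hane0 : a ≠ 0 := ne_of_gt ha0
  have e00 : a * (U 0 0 * V 0 0 + U 0 1 * V 1 0 + U 0 2 * V 2 0) = 1 := by
    have h1 : hexM a 0 0 = U 0 0 * V 0 0 + U 0 1 * V 1 0 + U 0 2 * V 2 0 := by
      rw [h, Matrix.mul_apply, Fin.sum_univ_three]
    rw [← h1, show hexM a 0 0 = 1/a * (1) from rfl, one_div,
      mul_inv_cancel_left₀ hane0]
  have e01 : a * (U 0 0 * V 0 1 + U 0 1 * V 1 1 + U 0 2 * V 2 1) = a := by
    have h1 : hexM a 0 1 = U 0 0 * V 0 1 + U 0 1 * V 1 1 + U 0 2 * V 2 1 := by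
      rw [h, Matrix.mul_apply, Fin.sum_univ_three]
    rw [← h1, show hexM a 0 1 = 1/a * (a) from rfl, one_div,
      mul_inv_cancel_left₀ hane0]
  have e02 : a * (U 0 0 * V 0 2 + U 0 1 * V 1 2 + U 0 2 * V 2 2) = 2*a-1 := by
    have h1 : hexM a 0 2 = U 0 0 * V 0 2 + U 0 1 * V 1 2 + U 0 2 * V 2 2 := by
      rw [h, Matrix.mul_apply, Fin.sum_univ_three]
    rw [← h1, show hexM a 0 2 = 1/a * (2*a-1) from rfl, one_div,
      mul_inv_cancel_left₀ hane0]
  have e03 : a * (U 0 0 * V 0 3 + U 0 1 * V 1 3 + U 0 2 * V 2 3) = 2*a-1 := by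
    have h1 : hexM a 0 3 = U 0 0 * V 0 3 + U 0 1 * V 1 3 + U 0 2 * V 2 3 := by
      rw [h, Matrix.mul_apply, Fin.sum_univ_three]
    rw [← h1, show hexM a 0 3 = 1/a * (2*a-1) from rfl, one_div,
      mul_inv_cancel_left₀ hane0]
  have e04 : a * (U 0 0 * V 0 4 + U 0 1 * V 1 4 + U 0 2 * V 2 4) = a := by
    have h1 : hexM a 0 4 = U 0 0 * V 0 4 + U 0 1 * V 1 4 + U 0 2 * V 2 4 := by
      rw [h, Matrix.mul_apply, Fin.sum_univ_three]
    rw [← h1, show hexM a 0 4 = 1/a * (a) from rfl, one_div,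
      mul_inv_cancel_left₀ hane0]
  have e05 : a * (U 0 0 * V 0 5 + U 0 1 * V 1 5 + U 0 2 * V 2 5) = 1 := by
    have h1 : hexM a 0 5 = U 0 0 * V 0 5 + U 0 1 * V 1 5 + U 0 2 * V 2 5 := by
      rw [h, Matrix.mul_apply, Fin.sum_univ_three]
    rw [← h1, show hexM a 0 5 = 1/a * (1) from rfl, one_div,
      mul_inv_cancel_left₀ hane0]
  have e10 : a * (U 1 0 * V 0 0 + U 1 1 * V 1 0 + U 1 2 * V 2 0) = 1 := by
    have h1 : hexM a 1 0 = U 1 0 * V 0 0 + U 1 1 * V 1 0 + U 1 2 * V 2 0 := by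
      rw [h, Matrix.mul_apply, Fin.sum_univ_three]
    rw [← h1, show hexM a 1 0 = 1/a * (1) from rfl, one_div,
      mul_inv_cancel_left₀ hane0]
  have e11 : a * (U 1 0 * V 0 1 + U 1 1 * V 1 1 + U 1 2 * V 2 1) = 1 := by
    have h1 : hexM a 1 1 = U 1 0 * V 0 1 + U 1 1 * V 1 1 + U 1 2 * V 2 1 := by
      rw [h, Matrix.mul_apply, Fin.sum_univ_three]
    rw [← h1, show hexM a 1 1 = 1/a * (1) from rfl, one_div,
      mul_inv_cancel_left₀ hane0]
  have e12 : a * (U 1 0 * V 0 2 + U 1 1 * V 1 2 + U 1 2 * V 2 2) = a := by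
    have h1 : hexM a 1 2 = U 1 0 * V 0 2 + U 1 1 * V 1 2 + U 1 2 * V 2 2 := by
      rw [h, Matrix.mul_apply, Fin.sum_univ_three]
    rw [← h1, show hexM a 1 2 = 1/a * (a) from rfl, one_div,
      mul_inv_cancel_left₀ hane0]
  have e13 : a * (U 1 0 * V 0 3 + U 1 1 * V 1 3 + U 1 2 * V 2 3) = 2*a-1 := by
    have h1 : hexM a 1 3 = U 1 0 * V 0 3 + U 1 1 * V 1 3 + U 1 2 * V 2 3 := by
      rw [h, Matrix.mul_apply, Fin.sum_univ_three]
    rw [← h1, show hexM a 1 3 = 1/a * (2*a-1) from rfl, one_div,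
      mul_inv_cancel_left₀ hane0]
  have e14 : a * (U 1 0 * V 0 4 + U 1 1 * V 1 4 + U 1 2 * V 2 4) = 2*a-1 := by
    have h1 : hexM a 1 4 = U 1 0 * V 0 4 + U 1 1 * V 1 4 + U 1 2 * V 2 4 := by
      rw [h, Matrix.mul_apply, Fin.sum_univ_three]
    rw [← h1, show hexM a 1 4 = 1/a * (2*a-1) from rfl, one_div,
      mul_inv_cancel_left₀ hane0]
  have e15 : a * (U 1 0 * V 0 5 + U 1 1 * V 1 5 + U 1 2 * V 2 5) = a := by
    have h1 : hexM a 1 5 = U 1 0 * V 0 5 + U 1 1 * V 1 5 + U 1 2 * V 2 5 := by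
      rw [h, Matrix.mul_apply, Fin.sum_univ_three]
    rw [← h1, show hexM a 1 5 = 1/a * (a) from rfl, one_div,
      mul_inv_cancel_left₀ hane0]
  have e20 : a * (U 2 0 * V 0 0 + U 2 1 * V 1 0 + U 2 2 * V 2 0) = a := by
    have h1 : hexM a 2 0 = U 2 0 * V 0 0 + U 2 1 * V 1 0 + U 2 2 * V 2 0 := by
      rw [h, Matrix.mul_apply, Fin.sum_univ_three]
    rw [← h1, show hexM a 2 0 = 1/a * (a) from rfl, one_div,
      mul_inv_cancel_left₀ hane0]
  have e21 : a * (U 2 0 * V 0 1 + U 2 1 * V 1 1 + U 2 2 * V 2 1) = 1 := by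
    have h1 : hexM a 2 1 = U 2 0 * V 0 1 + U 2 1 * V 1 1 + U 2 2 * V 2 1 := by
      rw [h, Matrix.mul_apply, Fin.sum_univ_three]
    rw [← h1, show hexM a 2 1 = 1/a * (1) from rfl, one_div,
      mul_inv_cancel_left₀ hane0]
  have e22 : a * (U 2 0 * V 0 2 + U 2 1 * V 1 2 + U 2 2 * V 2 2) = 1 := by
    have h1 : hexM a 2 2 = U 2 0 * V 0 2 + U 2 1 * V 1 2 + U 2 2 * V 2 2 := by
      rw [h, Matrix.mul_apply, Fin.sum_univ_three]
    rw [← h1, show hexM a 2 2 = 1/a * (1) from rfl, one_div,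
      mul_inv_cancel_left₀ hane0]
  have e23 : a * (U 2 0 * V 0 3 + U 2 1 * V 1 3 + U 2 2 * V 2 3) = a := by
    have h1 : hexM a 2 3 = U 2 0 * V 0 3 + U 2 1 * V 1 3 + U 2 2 * V 2 3 := by
      rw [h, Matrix.mul_apply, Fin.sum_univ_three]
    rw [← h1, show hexM a 2 3 = 1/a * (a) from rfl, one_div,
      mul_inv_cancel_left₀ hane0]
  have e24 : a * (U 2 0 * V 0 4 + U 2 1 * V 1 4 + U 2 2 * V 2 4) = 2*a-1 := by
    have h1 : hexM a 2 4 = U 2 0 * V 0 4 + U 2 1 * V 1 4 + U 2 2 * V 2 4 := by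
      rw [h, Matrix.mul_apply, Fin.sum_univ_three]
    rw [← h1, show hexM a 2 4 = 1/a * (2*a-1) from rfl, one_div,
      mul_inv_cancel_left₀ hane0]
  have e25 : a * (U 2 0 * V 0 5 + U 2 1 * V 1 5 + U 2 2 * V 2 5) = 2*a-1 := by
    have h1 : hexM a 2 5 = U 2 0 * V 0 5 + U 2 1 * V 1 5 + U 2 2 * V 2 5 := by
      rw [h, Matrix.mul_apply, Fin.sum_univ_three]
    rw [← h1, show hexM a 2 5 = 1/a * (2*a-1) from rfl, one_div,
      mul_inv_cancel_left₀ hane0]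
  have e30 : a * (U 3 0 * V 0 0 + U 3 1 * V 1 0 + U 3 2 * V 2 0) = 2*a-1 := by
    have h1 : hexM a 3 0 = U 3 0 * V 0 0 + U 3 1 * V 1 0 + U 3 2 * V 2 0 := by
      rw [h, Matrix.mul_apply, Fin.sum_univ_three]
    rw [← h1, show hexM a 3 0 = 1/a * (2*a-1) from rfl, one_div,
      mul_inv_cancel_left₀ hane0]
  have e31 : a * (U 3 0 * V 0 1 + U 3 1 * V 1 1 + U 3 2 * V 2 1) = a := by
    have h1 : hexM a 3 1 = U 3 0 * V 0 1 + U 3 1 * V 1 1 + U 3 2 * V 2 1 := by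
      rw [h, Matrix.mul_apply, Fin.sum_univ_three]
    rw [← h1, show hexM a 3 1 = 1/a * (a) from rfl, one_div,
      mul_inv_cancel_left₀ hane0]
  have e32 : a * (U 3 0 * V 0 2 + U 3 1 * V 1 2 + U 3 2 * V 2 2) = 1 := by
    have h1 : hexM a 3 2 = U 3 0 * V 0 2 + U 3 1 * V 1 2 + U 3 2 * V 2 2 := by
      rw [h, Matrix.mul_apply, Fin.sum_univ_three]
    rw [← h1, show hexM a 3 2 = 1/a * (1) from rfl, one_div,
      mul_inv_cancel_left₀ hane0]
  have e33 : a * (U 3 0 * V 0 3 + U 3 1 * V 1 3 + U 3 2 * V 2 3) = 1 := by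
    have h1 : hexM a 3 3 = U 3 0 * V 0 3 + U 3 1 * V 1 3 + U 3 2 * V 2 3 := by
      rw [h, Matrix.mul_apply, Fin.sum_univ_three]
    rw [← h1, show hexM a 3 3 = 1/a * (1) from rfl, one_div,
      mul_inv_cancel_left₀ hane0]
  have e34 : a * (U 3 0 * V 0 4 + U 3 1 * V 1 4 + U 3 2 * V 2 4) = a := by
    have h1 : hexM a 3 4 = U 3 0 * V 0 4 + U 3 1 * V 1 4 + U 3 2 * V 2 4 := by
      rw [h, Matrix.mul_apply, Fin.sum_univ_three]
    rw [← h1, show hexM a 3 4 = 1/a * (a) from rfl, one_div,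
      mul_inv_cancel_left₀ hane0]
  have e35 : a * (U 3 0 * V 0 5 + U 3 1 * V 1 5 + U 3 2 * V 2 5) = 2*a-1 := by
    have h1 : hexM a 3 5 = U 3 0 * V 0 5 + U 3 1 * V 1 5 + U 3 2 * V 2 5 := by
      rw [h, Matrix.mul_apply, Fin.sum_univ_three]
    rw [← h1, show hexM a 3 5 = 1/a * (2*a-1) from rfl, one_div,
      mul_inv_cancel_left₀ hane0]
  have e40 : a * (U 4 0 * V 0 0 + U 4 1 * V 1 0 + U 4 2 * V 2 0) = 2*a-1 := by
    have h1 : hexM a 4 0 = U 4 0 * V 0 0 + U 4 1 * V 1 0 + U 4 2 * V 2 0 := by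
      rw [h, Matrix.mul_apply, Fin.sum_univ_three]
    rw [← h1, show hexM a 4 0 = 1/a * (2*a-1) from rfl, one_div,
      mul_inv_cancel_left₀ hane0]
  have e41 : a * (U 4 0 * V 0 1 + U 4 1 * V 1 1 + U 4 2 * V 2 1) = 2*a-1 := by
    have h1 : hexM a 4 1 = U 4 0 * V 0 1 + U 4 1 * V 1 1 + U 4 2 * V 2 1 := by
      rw [h, Matrix.mul_apply, Fin.sum_univ_three]
    rw [← h1, show hexM a 4 1 = 1/a * (2*a-1) from rfl, one_div,
      mul_inv_cancel_left₀ hane0]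
  have e42 : a * (U 4 0 * V 0 2 + U 4 1 * V 1 2 + U 4 2 * V 2 2) = a := by
    have h1 : hexM a 4 2 = U 4 0 * V 0 2 + U 4 1 * V 1 2 + U 4 2 * V 2 2 := by
      rw [h, Matrix.mul_apply, Fin.sum_univ_three]
    rw [← h1, show hexM a 4 2 = 1/a * (a) from rfl, one_div,
      mul_inv_cancel_left₀ hane0]
  have e43 : a * (U 4 0 * V 0 3 + U 4 1 * V 1 3 + U 4 2 * V 2 3) = 1 := by
    have h1 : hexM a 4 3 = U 4 0 * V 0 3 + U 4 1 * V 1 3 + U 4 2 * V 2 3 := by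
      rw [h, Matrix.mul_apply, Fin.sum_univ_three]
    rw [← h1, show hexM a 4 3 = 1/a * (1) from rfl, one_div,
      mul_inv_cancel_left₀ hane0]
  have e44 : a * (U 4 0 * V 0 4 + U 4 1 * V 1 4 + U 4 2 * V 2 4) = 1 := by
    have h1 : hexM a 4 4 = U 4 0 * V 0 4 + U 4 1 * V 1 4 + U 4 2 * V 2 4 := by
      rw [h, Matrix.mul_apply, Fin.sum_univ_three]
    rw [← h1, show hexM a 4 4 = 1/a * (1) from rfl, one_div,
      mul_inv_cancel_left₀ hane0]
  have e45 : a * (U 4 0 * V 0 5 + U 4 1 * V 1 5 + U 4 2 * V 2 5) = a := by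
    have h1 : hexM a 4 5 = U 4 0 * V 0 5 + U 4 1 * V 1 5 + U 4 2 * V 2 5 := by
      rw [h, Matrix.mul_apply, Fin.sum_univ_three]
    rw [← h1, show hexM a 4 5 = 1/a * (a) from rfl, one_div,
      mul_inv_cancel_left₀ hane0]
  have e50 : a * (U 5 0 * V 0 0 + U 5 1 * V 1 0 + U 5 2 * V 2 0) = a := by
    have h1 : hexM a 5 0 = U 5 0 * V 0 0 + U 5 1 * V 1 0 + U 5 2 * V 2 0 := by
      rw [h, Matrix.mul_apply, Fin.sum_univ_three]
    rw [← h1, show hexM a 5 0 = 1/a * (a) from rfl, one_div,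
      mul_inv_cancel_left₀ hane0]
  have e51 : a * (U 5 0 * V 0 1 + U 5 1 * V 1 1 + U 5 2 * V 2 1) = 2*a-1 := by
    have h1 : hexM a 5 1 = U 5 0 * V 0 1 + U 5 1 * V 1 1 + U 5 2 * V 2 1 := by
      rw [h, Matrix.mul_apply, Fin.sum_univ_three]
    rw [← h1, show hexM a 5 1 = 1/a * (2*a-1) from rfl, one_div,
      mul_inv_cancel_left₀ hane0]
  have e52 : a * (U 5 0 * V 0 2 + U 5 1 * V 1 2 + U 5 2 * V 2 2) = 2*a-1 := by
    have h1 : hexM a 5 2 = U 5 0 * V 0 2 + U 5 1 * V 1 2 + U 5 2 * V 2 2 := by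
      rw [h, Matrix.mul_apply, Fin.sum_univ_three]
    rw [← h1, show hexM a 5 2 = 1/a * (2*a-1) from rfl, one_div,
      mul_inv_cancel_left₀ hane0]
  have e53 : a * (U 5 0 * V 0 3 + U 5 1 * V 1 3 + U 5 2 * V 2 3) = a := by
    have h1 : hexM a 5 3 = U 5 0 * V 0 3 + U 5 1 * V 1 3 + U 5 2 * V 2 3 := by
      rw [h, Matrix.mul_apply, Fin.sum_univ_three]
    rw [← h1, show hexM a 5 3 = 1/a * (a) from rfl, one_div,
      mul_inv_cancel_left₀ hane0]
  have e54 : a * (U 5 0 * V 0 4 + U 5 1 * V 1 4 + U 5 2 * V 2 4) = 1 := by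
    have h1 : hexM a 5 4 = U 5 0 * V 0 4 + U 5 1 * V 1 4 + U 5 2 * V 2 4 := by
      rw [h, Matrix.mul_apply, Fin.sum_univ_three]
    rw [← h1, show hexM a 5 4 = 1/a * (1) from rfl, one_div,
      mul_inv_cancel_left₀ hane0]
  have e55 : a * (U 5 0 * V 0 5 + U 5 1 * V 1 5 + U 5 2 * V 2 5) = 1 := by
    have h1 : hexM a 5 5 = U 5 0 * V 0 5 + U 5 1 * V 1 5 + U 5 2 * V 2 5 := by
      rw [h, Matrix.mul_apply, Fin.sum_univ_three]
    rw [← h1, show hexM a 5 5 = 1/a * (1) from rfl, one_div,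
      mul_inv_cancel_left₀ hane0]
  have hdetprod : (U 0 0*(U 1 1*U 2 2 - U 2 1*U 1 2) - U 1 0*(U 0 1*U 2 2 - U 2 1*U 0 2) + U 2 0*(U 0 1*U 1 2 - U 1 1*U 0 2)) * (V 0 0*(V 1 1*V 2 2 - V 1 2*V 2 1) - V 0 1*(V 1 0*V 2 2 - V 1 2*V 2 0) + V 0 2*(V 1 0*V 2 1 - V 1 1*V 2 0)) * a^3 = a*(a-1)^2 := by
    linear_combination ((a * (U 1 0 * V 0 1 + U 1 1 * V 1 1 + U 1 2 * V 2 1))*(a * (U 2 0 * V 0 2 + U 2 1 * V 1 2 + U 2 2 * V 2 2)) - (a * (U 1 0 * V 0 2 + U 1 1 * V 1 2 + U 1 2 * V 2 2))*(a * (U 2 0 * V 0 1 + U 2 1 * V 1 1 + U 2 2 * V 2 1)))*e00 + (-((a * (U 1 0 * V 0 0 + U 1 1 * V 1 0 + U 1 2 * V 2 0))*(a * (U 2 0 * V 0 2 + U 2 1 * V 1 2 + U 2 2 * V 2 2)) - (a * (U 1 0 * V 0 2 + U 1 1 * V 1 2 + U 1 2 * V 2 2))*(a * (U 2 0 * V 0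 0 + U 2 1 * V 1 0 + U 2 2 * V 2 0))))*e01 + ((a * (U 1 0 * V 0 0 + U 1 1 * V 1 0 + U 1 2 * V 2 0))*(a * (U 2 0 * V 0 1 + U 2 1 * V 1 1 + U 2 2 * V 2 1)) - (a * (U 1 0 * V 0 1 + U 1 1 * V 1 1 + U 1 2 * V 2 1))*(a * (U 2 0 * V 0 0 + U 2 1 * V 1 0 + U 2 2 * V 2 0)))*e02 + (-((a)*(a * (U 2 0 * V 0 2 + U 2 1 * V 1 2 + U 2 2 * V 2 2)) - (2*a-1)*(a * (U 2 0 * V 0 1 + U 2 1 * V 1 1 + U 2 2 * V 2 1))))*e10 + ((1)*(a * (U 2 0 * V 0 2 + U 2 1 * V 1 2 + U 2 2 * V 2 2)) - (2*a-1)*(a * (U 2 0 * V 0 0 + U 2 1 * V 1 0 + U 2 2 * V 2 0)))*e11 + (-((1)*(a * (U 2 0 * V 0 1 + U 2 1 * V 1 1 + U 2 2 * V 2 1)) - (a)*(a * (U 2 0 * V 0 0 + U 2 1 * V 1 0 + U 2 2 * V 2 0))))*e12 + ((a)*(a) - (2*a-1)*(1))*e20 + (-((1)*(a) - (2*a-1)*(1)))*e21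 + ((1)*(1) - (a)*(1))*e22
  have hX : a*(a-1)^2 ≠ 0 := ne_of_gt (mul_pos ha0 (pow_pos (by linarith) 2))
  have hdetU : (U 0 0*(U 1 1*U 2 2 - U 2 1*U 1 2) - U 1 0*(U 0 1*U 2 2 - U 2 1*U 0 2) + U 2 0*(U 0 1*U 1 2 - U 1 1*U 0 2)) ≠ 0 := by
    intro h0; exact hX (by rw [← hdetprod, h0]; ring)
  have hdetV : (V 0 0*(V 1 1*V 2 2 - V 1 2*V 2 1) - V 0 1*(V 1 0*V 2 2 - V 1 2*V 2 0) + V 0 2*(V 1 0*V 2 1 - V 1 1*V 2 0)) ≠ 0 := by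
    intro h0; exact hX (by rw [← hdetprod, h0]; ring)
  have hA := hex_cramer3 (V 0 0) (V 0 1) (V 0 2) (V 1 0) (V 1 1) (V 1 2) (V 2 0) (V 2 1) (V 2 2)
    (a * (2*U 0 0 - 2*U 1 0 + U 2 0 - U 5 0)) (a * (2*U 0 1 - 2*U 1 1 + U 2 1 - U 5 1)) (a * (2*U 0 2 - 2*U 1 2 + U 2 2 - U 5 2)) hdetV
    (by linear_combination 2*e00 - 2*e10 + e20 - e50)
    (by linear_combination 2*e01 - 2*e11 + e21 - e51)
    (by linear_combination 2*e02 - 2*e12 + e22 - e52)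
  have hB := hex_cramer3 (V 0 0) (V 0 1) (V 0 2) (V 1 0) (V 1 1) (V 1 2) (V 2 0) (V 2 1) (V 2 2)
    (a * (U 0 0 - U 2 0 + U 3 0 - U 5 0)) (a * (U 0 1 - U 2 1 + U 3 1 - U 5 1)) (a * (U 0 2 - U 2 2 + U 3 2 - U 5 2)) hdetV
    (by linear_combination e00 - e20 + e30 - e50)
    (by linear_combination e01 - e21 + e31 - e51)
    (by linear_combination e02 - e22 + e32 - e52)
  have hC := hex_cramer3 (V 0 0) (V 0 1) (V 0 2) (V 1 0) (V 1 1) (V 1 2) (V 2 0) (V 2 1) (V 2 2)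
    (a * (U 0 0 - U 1 0 + U 2 0 - U 3 0 + U 4 0 - U 5 0)) (a * (U 0 1 - U 1 1 + U 2 1 - U 3 1 + U 4 1 - U 5 1)) (a * (U 0 2 - U 1 2 + U 2 2 - U 3 2 + U 4 2 - U 5 2)) hdetV
    (by linear_combination e00 - e10 + e20 - e30 + e40 - e50)
    (by linear_combination e01 - e11 + e21 - e31 + e41 - e51)
    (by linear_combination e02 - e12 + e22 - e32 + e42 - e52)
  have hAw := hex_cramer3 (U 0 0) (U 1 0) (U 2 0) (U 0 1) (U 1 1) (U 2 1) (U 0 2) (U 1 2) (U 2 2)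
    (a * (2*V 0 0 - 2*V 0 1 + V 0 2 - V 0 5)) (a * (2*V 1 0 - 2*V 1 1 + V 1 2 - V 1 5)) (a * (2*V 2 0 - 2*V 2 1 + V 2 2 - V 2 5)) hdetU
    (by linear_combination 2*e00 - 2*e01 + e02 - e05)
    (by linear_combination 2*e10 - 2*e11 + e12 - e15)
    (by linear_combination 2*e20 - 2*e21 + e22 - e25)
  have hBw := hex_cramer3 (U 0 0) (U 1 0) (U 2 0) (U 0 1) (U 1 1) (U 2 1) (U 0 2) (U 1 2) (U 2 2)
    (a * (V 0 0 - V 0 2 + V 0 3 - V 0 5)) (a * (V 1 0 - V 1 2 + V 1 3 - V 1 5)) (a * (V 2 0 - V 2 2 + V 2 3 - V 2 5)) hdetU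
    (by linear_combination e00 - e02 + e03 - e05)
    (by linear_combination e10 - e12 + e13 - e15)
    (by linear_combination e20 - e22 + e23 - e25)
  have hCw := hex_cramer3 (U 0 0) (U 1 0) (U 2 0) (U 0 1) (U 1 1) (U 2 1) (U 0 2) (U 1 2) (U 2 2)
    (a * (V 0 0 - V 0 1 + V 0 2 - V 0 3 + V 0 4 - V 0 5)) (a * (V 1 0 - V 1 1 + V 1 2 - V 1 3 + V 1 4 - V 1 5)) (a * (V 2 0 - V 2 1 + V 2 2 - V 2 3 + V 2 4 - V 2 5)) hdetU
    (by linear_combination e00 - e01 + e02 - e03 + e04 - e05)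
    (by linear_combination e10 - e11 + e12 - e13 + e14 - e15)
    (by linear_combination e20 - e21 + e22 - e23 + e24 - e25)
  have hA0 : 2*U 0 0 - 2*U 1 0 + U 2 0 - U 5 0 = 0 := (mul_eq_zero.1 hA.1).resolve_left hane0
  have hA1 : 2*U 0 1 - 2*U 1 1 + U 2 1 - U 5 1 = 0 := (mul_eq_zero.1 hA.2.1).resolve_left hane0
  have hA2 : 2*U 0 2 - 2*U 1 2 + U 2 2 - U 5 2 = 0 := (mul_eq_zero.1 hA.2.2).resolve_left hane0
  have hB0 : U 0 0 - U 2 0 + U 3 0 - U 5 0 = 0 := (mul_eq_zero.1 hB.1).resolve_left hane0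
  have hB1 : U 0 1 - U 2 1 + U 3 1 - U 5 1 = 0 := (mul_eq_zero.1 hB.2.1).resolve_left hane0
  have hB2 : U 0 2 - U 2 2 + U 3 2 - U 5 2 = 0 := (mul_eq_zero.1 hB.2.2).resolve_left hane0
  have hC0 : U 0 0 - U 1 0 + U 2 0 - U 3 0 + U 4 0 - U 5 0 = 0 := (mul_eq_zero.1 hC.1).resolve_left hane0
  have hC1 : U 0 1 - U 1 1 + U 2 1 - U 3 1 + U 4 1 - U 5 1 = 0 := (mul_eq_zero.1 hC.2.1).resolve_left hane0
  have hC2 : U 0 2 - U 1 2 + U 2 2 - U 3 2 + U 4 2 - U 5 2 = 0 := (mul_eq_zero.1 hC.2.2).resolve_left hane0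
  have hAw0 : 2*V 0 0 - 2*V 0 1 + V 0 2 - V 0 5 = 0 := (mul_eq_zero.1 hAw.1).resolve_left hane0
  have hAw1 : 2*V 1 0 - 2*V 1 1 + V 1 2 - V 1 5 = 0 := (mul_eq_zero.1 hAw.2.1).resolve_left hane0
  have hAw2 : 2*V 2 0 - 2*V 2 1 + V 2 2 - V 2 5 = 0 := (mul_eq_zero.1 hAw.2.2).resolve_left hane0
  have hBw0 : V 0 0 - V 0 2 + V 0 3 - V 0 5 = 0 := (mul_eq_zero.1 hBw.1).resolve_left hane0
  have hBw1 : V 1 0 - V 1 2 + V 1 3 - V 1 5 = 0 := (mul_eq_zero.1 hBw.2.1).resolve_left hane0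
  have hBw2 : V 2 0 - V 2 2 + V 2 3 - V 2 5 = 0 := (mul_eq_zero.1 hBw.2.2).resolve_left hane0
  have hCw0 : V 0 0 - V 0 1 + V 0 2 - V 0 3 + V 0 4 - V 0 5 = 0 := (mul_eq_zero.1 hCw.1).resolve_left hane0
  have hCw1 : V 1 0 - V 1 1 + V 1 2 - V 1 3 + V 1 4 - V 1 5 = 0 := (mul_eq_zero.1 hCw.2.1).resolve_left hane0
  have hCw2 : V 2 0 - V 2 1 + V 2 2 - V 2 3 + V 2 4 - V 2 5 = 0 := (mul_eq_zero.1 hCw.2.2).resolve_left hane0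
  have hF0 : 0 ≤ (U 5 0 + U 1 0 - U 0 0)*(V 0 5 + V 0 1 - V 0 0) + (U 0 0 - (U 5 0 + U 1 0 - U 0 0))*(V 0 0 - V 0 1) + (U 1 0 - (U 5 0 + U 1 0 - U 0 0))*(V 0 1 - (V 0 5 + V 0 1 - V 0 0)) :=
    hex_cert (U 0 0) (U 1 0) (U 5 0 + U 1 0 - U 0 0) (V 0 0) (V 0 1) (V 0 5 + V 0 1 - V 0 0)
      (hU 0 0) (hU 1 0) (by linarith [hU 2 0, hA0]) (by linarith [hU 3 0, hA0, hB0])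
      (by linarith [hU 4 0, hA0, hB0, hC0]) (by linarith [hU 5 0])
      (hV 0 0) (hV 0 1) (by linarith [hV 0 2, hAw0]) (by linarith [hV 0 3, hAw0, hBw0])
      (by linarith [hV 0 4, hAw0, hBw0, hCw0]) (by linarith [hV 0 5])
  have hF1 : 0 ≤ (U 5 1 + U 1 1 - U 0 1)*(V 1 5 + V 1 1 - V 1 0) + (U 0 1 - (U 5 1 + U 1 1 - U 0 1))*(V 1 0 - V 1 1) + (U 1 1 - (U 5 1 + U 1 1 - U 0 1))*(V 1 1 - (V 1 5 + V 1 1 - V 1 0)) :=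
    hex_cert (U 0 1) (U 1 1) (U 5 1 + U 1 1 - U 0 1) (V 1 0) (V 1 1) (V 1 5 + V 1 1 - V 1 0)
      (hU 0 1) (hU 1 1) (by linarith [hU 2 1, hA1]) (by linarith [hU 3 1, hA1, hB1])
      (by linarith [hU 4 1, hA1, hB1, hC1]) (by linarith [hU 5 1])
      (hV 1 0) (hV 1 1) (by linarith [hV 1 2, hAw1]) (by linarith [hV 1 3, hAw1, hBw1])
      (by linarith [hV 1 4, hAw1, hBw1, hCw1]) (by linarith [hV 1 5])
  have hF2 : 0 ≤ (U 5 2 + U 1 2 - U 0 2)*(V 2 5 + V 2 1 - V 2 0) + (U 0 2 - (U 5 2 + U 1 2 - U 0 2))*(V 2 0 - V 2 1) + (U 1 2 - (U 5 2 + U 1 2 - U 0 2))*(V 2 1 - (V 2 5 + V 2 1 - V 2 0)) :=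
    hex_cert (U 0 2) (U 1 2) (U 5 2 + U 1 2 - U 0 2) (V 2 0) (V 2 1) (V 2 5 + V 2 1 - V 2 0)
      (hU 0 2) (hU 1 2) (by linarith [hU 2 2, hA2]) (by linarith [hU 3 2, hA2, hB2])
      (by linarith [hU 4 2, hA2, hB2, hC2]) (by linarith [hU 5 2])
      (hV 2 0) (hV 2 1) (by linarith [hV 2 2, hAw2]) (by linarith [hV 2 3, hAw2, hBw2])
      (by linarith [hV 2 4, hAw2, hBw2, hCw2]) (by linarith [hV 2 5])
  have hfin : a * (((U 5 0 + U 1 0 - U 0 0)*(V 0 5 + V 0 1 - V 0 0) + (U 0 0 - (U 5 0 + U 1 0 - U 0 0))*(V 0 0 - V 0 1) + (U 1 0 - (U 5 0 + U 1 0 - U 0 0))*(V 0 1 - (V 0 5 + V 0 1 - V 0 0))) + ((U 5 1 + U 1 1 - U 0 1)*(V 1 5 + V 1 1 - V 1 0) + (U 0 1 - (U 5 1 + U 1 1 - U 0 1))*(V 1 0 - V 1 1) + (U 1 1 - (U 5 1 + U 1 1 - U 0 1))*(V 1 1 - (V 1 5 + V 1 1 - V 1 0))) + ((U 5 2 + U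 1 2 - U 0 2)*(V 2 5 + V 2 1 - V 2 0) + (U 0 2 - (U 5 2 + U 1 2 - U 0 2))*(V 2 0 - V 2 1) + (U 1 2 - (U 5 2 + U 1 2 - U 0 2))*(V 2 1 - (V 2 5 + V 2 1 - V 2 0)))) = 2 - a := by
    linear_combination 4*e00 - 3*e01 - 2*e05 - 2*e10 + 2*e11 + e15 - 3*e50 + 2*e51 + 2*e55
  have hs : 0 ≤ ((U 5 0 + U 1 0 - U 0 0)*(V 0 5 + V 0 1 - V 0 0) + (U 0 0 - (U 5 0 + U 1 0 - U 0 0))*(V 0 0 - V 0 1) + (U 1 0 - (U 5 0 + U 1 0 - U 0 0))*(V 0 1 - (V 0 5 + V 0 1 - V 0 0))) + ((U 5 1 + U 1 1 - U 0 1)*(V 1 5 + V 1 1 - V 1 0) + (U 0 1 - (U 5 1 + U 1 1 - U 0 1))*(V 1 0 - V 1 1) + (U 1 1 - (U 5 1 + U 1 1 - U 0 1))*(V 1 1 - (V 1 5 + V 1 1 - V 1 0))) + ((U 5 2 + U 1 2 - U 0 2)*(V 2 5 + V 2 1 - V 2 0) + (U 0 2 - (U 5 2 + U 1 2 - U 0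 2))*(V 2 0 - V 2 1) + (U 1 2 - (U 5 2 + U 1 2 - U 0 2))*(V 2 1 - (V 2 5 + V 2 1 - V 2 0))) := by linarith
  have hpos := mul_nonneg (le_of_lt ha0) hs
  rw [hfin] at hpos
  linarith

set_option maxHeartbeats 1000000 in
/-- For every `a > 2`, the hexagon matrix has nonnegative rank at least 4:
there is no entrywise nonnegative factorization of inner dimension 3. -/
theorem nnRank_hexM_ge_four {a : ℝ} (ha : 2 < a) :
    4 ≤ nnRank (hexM a) ∧
    ¬ ∃ (U : Matrix (Fin 6) (Fin 3) ℝ) (V : Matrix (Fin 3) (Fin 6) ℝ),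
        (∀ i k, 0 ≤ U i k) ∧ (∀ k j, 0 ≤ V k j) ∧ hexM a = U * V := by
  have hno := hex_noFact ha
  refine ⟨?_, hno⟩
  have ha0 : (0:ℝ) < a := by linarith
  have hMnn : ∀ i j : Fin 6, 0 ≤ hexM a i j := by
    intro i j
    rw [hexM, Matrix.smul_apply, smul_eq_mul]
    refine mul_nonneg (by positivity) ?_
    fin_cases i <;> fin_cases j <;> norm_num [hex_cons_val_five] <;> linarith
  have hne : {r : ℕ | ∃ (U : Matrix (Fin 6) (Fin r) ℝ) (V : Matrix (Fin r) (Fin 6) ℝ),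
      (∀ i k, 0 ≤ U i k) ∧ (∀ k j, 0 ≤ V k j) ∧ hexM a = U * V}.Nonempty := by
    refine ⟨6, hexM a, 1, hMnn, ?_, (Matrix.mul_one _).symm⟩
    intro k j
    rw [Matrix.one_apply]
    split <;> norm_num
  have hmem := Nat.sInf_mem hne
  rw [nnRank]
  set r := sInf {r : ℕ | ∃ (U : Matrix (Fin 6) (Fin r) ℝ) (V : Matrix (Fin r) (Fin 6) ℝ),
      (∀ i k, 0 ≤ U i k) ∧ (∀ k j, 0 ≤ V k j) ∧ hexM a = U * V} with hr
  by_contra hlt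
  push_neg at hlt
  interval_cases r
  · -- r = 0 : impossible, entry (0,0) would be 0
    obtain ⟨U, V, hU2, hV2, hUV⟩ := hmem
    have h00 : hexM a 0 0 = 0 := by
      rw [hUV, Matrix.mul_apply]
      simp
    rw [show hexM a 0 0 = 1/a * 1 from rfl] at h00
    have hgt : (1:ℝ)/a > 0 := by positivity
    linarith [h00, hgt]
  · -- r = 1 : pad to 3
    obtain ⟨U, V, hU2, hV2, hUV⟩ := hmem
    refine hno ⟨Matrix.of fun i k => if k = 0 then U i 0 else 0,
      Matrix.of fun k j => if k = 0 then V 0 j else 0, ?_, ?_, ?_⟩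
    · intro i k; simp only [Matrix.of_apply]; split
      · exact hU2 i 0
      · exact le_refl 0
    · intro k j; simp only [Matrix.of_apply]; split
      · exact hV2 0 j
      · exact le_refl 0
    · rw [hUV]; ext i j
      rw [Matrix.mul_apply, Matrix.mul_apply, Fin.sum_univ_three, Fin.sum_univ_one]
      norm_num [show (2 : Fin 3) ≠ 0 by decide, show (2 : Fin 3) ≠ 1 by decide]
  · -- r = 2 : pad to 3
    obtain ⟨U, V, hU2, hV2, hUV⟩ := hmem
    refine hno ⟨Matrix.of fun i k => if k = 0 then U i 0 else if k = 1 then U i 1 else 0,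
      Matrix.of fun k j => if k = 0 then V 0 j else if k = 1 then V 1 j else 0, ?_, ?_, ?_⟩
    · intro i k; simp only [Matrix.of_apply]; split
      · exact hU2 i 0
      · split
        · exact hU2 i 1
        · exact le_refl 0
    · intro k j; simp only [Matrix.of_apply]; split
      · exact hV2 0 j
      · split
        · exact hV2 1 j
        · exact le_refl 0
    · rw [hUV]; ext i j
      rw [Matrix.mul_apply, Matrix.mul_apply, Fin.sum_univ_three, Fin.sum_univ_two]
      norm_num [show (2 : Fin 3) ≠ 0 by decide, show (2 : Fin 3) ≠ 1 by decide]
  · -- r = 3 : direct contradiction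
    exact hno hmem
end

section
/- For every real number a > 1, the 6×6 matrix M_a has nonnegative rank at most 5, i.e., there exist entrywise nonnegative matrices U ∈ ℝ^{6×5} and V ∈ ℝ^{5×6} with M_a = U·V; this bound holds uniformly in a, even as a → ∞. -/
/-- Auxiliary simp lemma: evaluate vector notation at index `5`
(mathlib provides the analogues up to `4`). -/
@[simp]
theorem cons_val_five' {α : Type*} {m : ℕ} (x : α) (u : Fin m.succ.succ.succ.succ.succ → α) :
    Matrix.vecCons x u 5 =
      Matrix.vecHead (Matrix.vecTail (Matrix.vecTail (Matrix.vecTail (Matrix.vecTail u)))) :=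
  rfl


/-- Auxiliary simp lemma: `vecTail` of a constant vector is constant. -/
@[simp]
theorem tail_fin_const' {α : Type*} {n : ℕ} (a : α) :
    (Matrix.vecTail fun _ : Fin (n + 1) => a) = fun _ : Fin n => a :=
  rfl

/-- Auxiliary simp lemma: `vecHead` of a constant vector. -/
@[simp]
theorem head_fin_const' {α : Type*} {n : ℕ} (a : α) :
    (Matrix.vecHead fun _ : Fin (n + 1) => a) = a :=
  rfl

set_option maxHeartbeats 2000000 in
/-- For every `a > 1`, the hexagon matrix has nonnegative rank at most 5:
there is an entrywise nonnegative factorization of inner dimension 5. -/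
theorem nnRank_hexM_le_five {a : ℝ} (ha : 1 < a) :
    ∃ (U : Matrix (Fin 6) (Fin 5) ℝ) (V : Matrix (Fin 5) (Fin 6) ℝ),
      (∀ i k, 0 ≤ U i k) ∧ (∀ k j, 0 ≤ V k j) ∧ hexM a = U * V := by
  have ha0 : (0:ℝ) < a := lt_trans one_pos ha
  have ha0' : a ≠ 0 := ne_of_gt ha0
  refine ⟨!![8*a-5, 3, 3, 3, 6*a-3;
             4*a-1, 3, 3, 12*a-9, 3;
             3, 4*a-1, 3, 12*a-9, 3;
             3, 8*a-5, 3, 3, 6*a-3;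
             3, 4*a-1, 12*a-9, 3, 3;
             4*a-1, 3, 12*a-9, 3, 3],
          (1/(12*a)) • !![0,0,3,3,0,0;
                          3,0,0,0,0,3;
                          1,2,1,0,0,0;
                          0,0,0,1,2,1;
                          0,2,0,0,2,0], ?_, ?_, ?_⟩
  · intro i k
    fin_cases i <;> fin_cases k <;> simp <;> linarith
  · intro k j
    fin_cases k <;> fin_cases j <;> simp <;> positivity
  · ext i j
    fin_cases i <;> fin_cases j <;>
      simp [hexM, Matrix.mul_apply, Fin.sum_univ_five] <;>
      field_simp <;> ring
end

section
/- Let A ∈ ℝ^{p×k}, b ∈ ℝ^p, and let P = {x ∈ ℝ^k : b − Ax ≥ 0 entrywise} be a polytope equal to the convex hull of finitely many points w₁, …, w_n ∈ ℝ^k (each wⱼ ∈ P). Define the slack matrix S ∈ ℝ^{p×n} by S(i,j) = bᵢ − (A wⱼ)ᵢ, and suppose S = U·V for entrywise nonnegative matrices U ∈ ℝ^{p×r}, V ∈ ℝ^{r×n}. Then the projection of Q = {(x,y) ∈ ℝ^k × ℝ^r : b − Ax = Uy and y ≥ 0} onto the x-coordinates equals P, i.e., {x ∈ ℝ^k : ∃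 y ∈ ℝ^r, y ≥ 0 and b − Ax = Uy} = P. -/
/-- Yannakakis, direction `xp(P) ≤ rank₊(S_P)`: any exact nonnegative
factorization `S = U * V` of the slack matrix of a polytope
`P = {x | b - Ax ≥ 0} = conv{w₁,…,w_n}` yields an extended formulation of `P`:
the projection of `Q = {(x,y) | b - Ax = Uy, y ≥ 0}` onto `x` equals `P`. -/
theorem extended_formulation_of_slack_NMF {p k n r : ℕ}
    (A : Matrix (Fin p) (Fin k) ℝ) (b : Fin p → ℝ)
    (w : Fin n → Fin k → ℝ)
    (hP : {x : Fin k → ℝ | ∀ i, 0 ≤ b i - A.mulVec x i}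
            = convexHull ℝ (Set.range w))
    (U : Matrix (Fin p) (Fin r) ℝ) (V : Matrix (Fin r) (Fin n) ℝ)
    (hU : ∀ i l, 0 ≤ U i l) (hV : ∀ l j, 0 ≤ V l j)
    (hS : ∀ i j, b i - A.mulVec (w j) i = (U * V) i j) :
    {x : Fin k → ℝ | ∃ y : Fin r → ℝ, (∀ l, 0 ≤ y l) ∧
        (∀ i, b i - A.mulVec x i = U.mulVec y i)}
      = {x : Fin k → ℝ | ∀ i, 0 ≤ b i - A.mulVec x i} := by
  ext x
  simp only [Set.mem_setOf_eq]
  constructor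
  · rintro ⟨y, hy, hxy⟩ i
    rw [hxy i]
    show 0 ≤ ∑ l, U i l * y l
    exact Finset.sum_nonneg fun l _ => mul_nonneg (hU i l) (hy l)
  · intro hx
    have hx' : x ∈ convexHull ℝ (Set.range w) := by rw [← hP]; exact hx
    rw [convexHull_range_eq_exists_affineCombination] at hx'
    obtain ⟨s, c, hc₀, hc₁, hcx⟩ := hx'
    set c' : Fin n → ℝ := fun j => if j ∈ s then c j else 0 with hc'
    have hc'₀ : ∀ j, 0 ≤ c' j := by
      intro j; simp only [hc']
      split
      · exact hc₀ j ‹_›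
      · exact le_refl 0
    have hc'₁ : ∑ j, c' j = 1 := by
      rw [← hc₁]
      rw [Finset.sum_ite_mem, Finset.univ_inter]
    have hxc : x = ∑ j, c' j • w j := by
      rw [← hcx, Finset.affineCombination_eq_linear_combination s w c hc₁]
      rw [(Finset.sum_subset (Finset.subset_univ s)
        (fun j _ hj => by simp [hc', hj])).symm]
      exact Finset.sum_congr rfl fun j hj => by simp [hc', hj]
    refine ⟨V.mulVec c', fun l => ?_, fun i => ?_⟩
    · show 0 ≤ ∑ j, V l j * c' j
      exact Finset.sum_nonneg fun j _ => mul_nonneg (hV l j) (hc'₀ j)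
    have : U.mulVec (V.mulVec c') i = (U * V).mulVec c' i := by
      rw [← Matrix.mulVec_mulVec]
    rw [this]
    have hAx : A.mulVec x i = ∑ j, c' j * A.mulVec (w j) i := by
      rw [hxc]
      simp only [Matrix.mulVec, dotProduct, Finset.sum_apply, Pi.smul_apply,
        smul_eq_mul, Finset.mul_sum]
      rw [Finset.sum_comm]
      exact Finset.sum_congr rfl fun j _ => Finset.sum_congr rfl fun l _ => by ring
    calc b i - A.mulVec x i
        = ∑ j, c' j * (b i - A.mulVec (w j) i) := by
          simp only [mul_sub, Finset.sum_sub_distrib, ← Finset.sum_mul, hc'₁, one_mul, hAx]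
      _ = ∑ j, (U * V) i j * c' j :=
          Finset.sum_congr rfl fun j _ => by rw [← hS i j]; ring
      _ = (U * V).mulVec c' i := rfl
end

section
/- Let M ∈ ℝ^{p×n} be entrywise nonnegative, and let u ∈ ℝ^p, v ∈ ℝ^n be arbitrary vectors. Then ‖M − |u|·|v|ᵀ‖_F ≤ ‖M − u·vᵀ‖_F, where |u| and |v| denote the entrywise absolute values of u and v. In particular, replacing a rank-one factor by its entrywise absolute value never increases the Frobenius approximation error of a nonnegative matrix. -/
/-- For a nonnegative matrix `M`, replacing a rank-one factor `u vᵀ` by the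
entrywise absolute values `|u| |v|ᵀ` never increases the Frobenius error. -/
theorem abs_rankOne_approx_le {p n : ℕ}
    (M : Matrix (Fin p) (Fin n) ℝ) (hM : ∀ i j, 0 ≤ M i j)
    (u : Fin p → ℝ) (v : Fin n → ℝ) :
    Real.sqrt (∑ i, ∑ j, (M i j - |u i| * |v j|) ^ 2)
      ≤ Real.sqrt (∑ i, ∑ j, (M i j - u i * v j) ^ 2) := by
  apply Real.sqrt_le_sqrt
  apply Finset.sum_le_sum
  intro i _
  apply Finset.sum_le_sum
  intro j _
  have h1 : u i * v j ≤ |u i| * |v j| := by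
    calc u i * v j ≤ |u i * v j| := le_abs_self _
    _ = |u i| * |v j| := abs_mul _ _
  nlinarith [hM i j, abs_nonneg (u i), abs_nonneg (v j), sq_abs (u i), sq_abs (v j)]
end

section
/- Let M ∈ ℝ^{p×n} be entrywise nonnegative. Then the infimum of ‖M − u·vᵀ‖_F over all pairs u ∈ ℝ^p, v ∈ ℝ^n equals the infimum of ‖M − u·vᵀ‖_F over all entrywise nonnegative pairs u ≥ 0, v ≥ 0. That is, the rank-one NMF problem has the same optimal value as the unconstrained rank-one approximation problem. -/
/-- The rank-one NMF problem has the same optimal value as the unconstrained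
rank-one approximation problem: for a nonnegative matrix `M`, the infimum of the
Frobenius error `‖M - u vᵀ‖_F` over all pairs `(u, v)` equals the infimum over
all entrywise nonnegative pairs `(u, v)`. -/
theorem rankOne_NMF_infimum_eq {p n : ℕ}
    (M : Matrix (Fin p) (Fin n) ℝ) (hM : ∀ i j, 0 ≤ M i j) :
    sInf {c : ℝ | ∃ (u : Fin p → ℝ) (v : Fin n → ℝ),
        c = Real.sqrt (∑ i, ∑ j, (M i j - u i * v j) ^ 2)}
      = sInf {c : ℝ | ∃ (u : Fin p → ℝ) (v : Fin n → ℝ),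
          (∀ i, 0 ≤ u i) ∧ (∀ j, 0 ≤ v j) ∧
          c = Real.sqrt (∑ i, ∑ j, (M i j - u i * v j) ^ 2)} := by
  set S := {c : ℝ | ∃ (u : Fin p → ℝ) (v : Fin n → ℝ),
        c = Real.sqrt (∑ i, ∑ j, (M i j - u i * v j) ^ 2)} with hS
  set T := {c : ℝ | ∃ (u : Fin p → ℝ) (v : Fin n → ℝ),
          (∀ i, 0 ≤ u i) ∧ (∀ j, 0 ≤ v j) ∧
          c = Real.sqrt (∑ i, ∑ j, (M i j - u i * v j) ^ 2)} with hT
  have hSbdd : BddBelow S := by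
    refine ⟨0, fun c hc => ?_⟩
    obtain ⟨u, v, rfl⟩ := hc
    exact Real.sqrt_nonneg _
  have hSne : S.Nonempty := ⟨_, 0, 0, rfl⟩
  apply le_antisymm
  · apply csInf_le_csInf hSbdd
    · exact ⟨_, 0, 0, fun _ => le_refl 0, fun _ => le_refl 0, rfl⟩
    · rintro c ⟨u, v, _, _, rfl⟩
      exact ⟨u, v, rfl⟩
  · apply le_csInf hSne
    rintro c ⟨u, v, rfl⟩
    have key : Real.sqrt (∑ i, ∑ j, (M i j - |u i| * |v j|) ^ 2)
        ≤ Real.sqrt (∑ i, ∑ j, (M i j - u i * v j) ^ 2) := by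
      apply Real.sqrt_le_sqrt
      apply Finset.sum_le_sum
      intro i _
      apply Finset.sum_le_sum
      intro j _
      have h1 : u i * v j ≤ |u i * v j| := le_abs_self _
      have h2 := mul_nonneg (hM i j) (sub_nonneg.2 h1)
      have h3 : |u i| * |v j| = |u i * v j| := (abs_mul _ _).symm
      rw [h3]
      nlinarith [sq_abs (u i * v j)]
    calc sInf T ≤ Real.sqrt (∑ i, ∑ j, (M i j - |u i| * |v j|) ^ 2) := by
          apply csInf_le
          · refine ⟨0, fun c hc => ?_⟩
            obtain ⟨u, v, _, _, rfl⟩ := hc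
            exact Real.sqrt_nonneg _
          · exact ⟨fun i => |u i|, fun j => |v j|, fun i => abs_nonneg _,
              fun j => abs_nonneg _, rfl⟩
      _ ≤ _ := key
end

section
/- Let M ∈ ℝ^{p×n} be entrywise nonnegative with every column summing to 1, and suppose M = M(:,K)·V for a subset K of column indices and an entrywise nonnegative matrix V. Then the convex hull of the set of all columns of M equals the convex hull of the set of columns of M indexed by K, i.e., conv{M(:,j) : 1 ≤ j ≤ n} = conv{M(:,j) : j ∈ K}. -/
/-- If `M` is nonnegative with columns summing to one and is separable with
respect to a set `K` of column indices (`M = M(:,K) · V` with `V` nonnegative),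
then the convex hull of the columns of `M` equals the convex hull of the
columns of `M` indexed by `K`. -/
theorem separable_convexHull_eq {p n : ℕ}
    (M : Matrix (Fin p) (Fin n) ℝ) (hM : ∀ i j, 0 ≤ M i j)
    (hcol : ∀ j, ∑ i, M i j = 1)
    (K : Finset (Fin n)) (V : Matrix K (Fin n) ℝ) (hV : ∀ k j, 0 ≤ V k j)
    (hfact : M = M.submatrix id (fun k : K => (k : Fin n)) * V) :
    convexHull ℝ {x : Fin p → ℝ | ∃ j : Fin n, x = fun i => M i j}
      = convexHull ℝ {x : Fin p → ℝ | ∃ j ∈ K, x = fun i => M i j} := by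
  apply le_antisymm
  · apply convexHull_min _ (convex_convexHull ℝ _)
    rintro x ⟨j, rfl⟩
    have hentry : ∀ i j, M i j = ∑ k : K, M i k * V k j := by
      intro i j
      conv_lhs => rw [hfact]
      simp [Matrix.mul_apply]
    have hw : ∑ k : K, V k j = 1 := by
      rw [← hcol j]
      symm
      calc ∑ i, M i j = ∑ i, ∑ k : K, M i k * V k j := by
            simp only [← hentry]
        _ = ∑ k : K, (∑ i, M i k) * V k j := by
            rw [Finset.sum_comm]
            simp [Finset.sum_mul]
        _ = ∑ k : K, V k j := by simp [hcol]
    have hmem : (Finset.univ : Finset K).centerMass (fun k => V k j)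
        (fun k => (fun i => M i (k : Fin n))) ∈
        convexHull ℝ {x : Fin p → ℝ | ∃ j ∈ K, x = fun i => M i j} := by
      apply Finset.centerMass_mem_convexHull
      · intro k _; exact hV k j
      · rw [hw]; norm_num
      · intro k _; exact ⟨k, k.2, rfl⟩
    rwa [Finset.centerMass_eq_of_sum_1 _ _ hw, show (∑ k : K, V k j • fun i => M i (k : Fin n))
      = fun i => M i j by funext i; simp [hentry i j, mul_comm]] at hmem
  · apply convexHull_mono
    rintro x ⟨j, _, rfl⟩
    exact ⟨j, rfl⟩
end
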